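/- Let F be a finite index set, V a finite set of Boolean variables, and for each p ∈ F let C_p be a CNF formula over V having at least 1 and at most 2 clauses, and D_p a predicate on assignments σ : V → Bool such that σ satisfies C_p if and only if D_p σ holds. For an assignment σ let δ(σ) be the number of p ∈ F with D_p σ, and let SAT(σ) be the total number, summed over p ∈ F, of clauses of C_p made true by σ. If ρ > 0 is a real number such that min over all assignments σ of δ(σ) is at least |F|/ρ, then the minimum over all assignments σ of SAT(σ) is at most (1+ρ) times the minimum over all assignments σ of δ(σ). -/

import Mathlib

/-- A literal is a pair (variable, polarity); it is true under `σ` iff `σ`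
maps the variable to the polarity.  A clause (list of literals) is made true
by `σ` iff some of its literals is true under `σ`. -/
def clauseTrue {V : Type} (σ : V → Bool) (cl : List (V × Bool)) : Bool :=
  cl.any fun l => σ l.1 == l.2

/-- Total number, over all indices `p`, of clauses of the CNF formula `C p`
made true by the assignment `σ`. -/
def satCount {F V : Type} [Fintype F] (C : F → List (List (V × Bool)))
    (σ : V → Bool) : ℕ :=
  ∑ p : F, (C p).countP (clauseTrue σ)

/-- Number of indices `p` such that the predicate `D p` holds of `σ`. -/
noncomputable def dCount {F V : Type} [Fintype F] (D : F → (V → Bool) → Prop)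
    (σ : V → Bool) : ℕ :=
  Nat.card {p : F // D p σ}

theorem min_satCount_le_of_min_dCount_large {F V : Type} [Fintype F] [Fintype V]
    (C : F → List (List (V × Bool))) (D : F → (V → Bool) → Prop)
    (hlen : ∀ p, 1 ≤ (C p).length ∧ (C p).length ≤ 2)
    (hiff : ∀ p σ, (∀ cl ∈ C p, clauseTrue σ cl = true) ↔ D p σ)
    (ρ : ℝ) (hρ : 0 < ρ)
    (hmin : (Fintype.card F : ℝ) / ρ ≤ ((sInf (Set.range (dCount D)) : ℕ) : ℝ)) :
    ((sInf (Set.range (satCount C)) : ℕ) : ℝ) ≤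
      (1 + ρ) * ((sInf (Set.range (dCount D)) : ℕ) : ℝ) := by
  classical
  set m := sInf (Set.range (dCount D)) with hm
  have hne : (Set.range (dCount D)).Nonempty := ⟨dCount D (fun _ => true), Set.mem_range_self _⟩
  obtain ⟨σ, hσ⟩ : ∃ σ, dCount D σ = m := Nat.sInf_mem hne
  -- key bound: satCount C σ ≤ card F + dCount D σ
  have hd : dCount D σ = ∑ p : F, (if D p σ then 1 else 0) := by
    rw [dCount, Nat.card_eq_fintype_card, Fintype.card_subtype, Finset.card_eq_sum_ones,
      Finset.sum_filter]
  have hkey : satCount C σ ≤ Fintype.card F + dCount D σ := by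
    rw [satCount, hd, Finset.card_univ.symm, Finset.card_eq_sum_ones, ← Finset.sum_add_distrib]
    apply Finset.sum_le_sum
    intro p _
    by_cases hD : D p σ
    · simp only [hD, if_true]
      calc (C p).countP (clauseTrue σ) ≤ (C p).length := List.countP_le_length
        _ ≤ 2 := (hlen p).2
    · simp only [hD, if_false]
      have hlt : (C p).countP (clauseTrue σ) < (C p).length := by
        rcases lt_or_eq_of_le (List.countP_le_length (p := clauseTrue σ) (l := C p)) with h | h
        · exact h
        · exfalso
          apply hD
          rw [← hiff]
          intro cl hcl
          exact List.countP_eq_length.mp h cl hcl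
      have h2 := (hlen p).2
      omega
  have hsle : sInf (Set.range (satCount C)) ≤ satCount C σ :=
    Nat.sInf_le (Set.mem_range_self _)
  have h1 : ((sInf (Set.range (satCount C)) : ℕ) : ℝ) ≤ (Fintype.card F : ℝ) + (m : ℝ) := by
    have := hkey
    rw [hσ] at this
    exact_mod_cast le_trans hsle this
  have h2 : (Fintype.card F : ℝ) ≤ ρ * m := by
    rw [div_le_iff₀ hρ] at hmin
    calc (Fintype.card F : ℝ) ≤ (m : ℝ) * ρ := hmin
      _ = ρ * m := mul_comm _ _
  calc ((sInf (Set.range (satCount C)) : ℕ) : ℝ) ≤ (Fintype.card F : ℝ) + m := h1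
    _ ≤ ρ * m + m := by linarith
    _ = (1 + ρ) * m := by ring
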